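/- Let m ≥ 1 be an integer and let c and s be real numbers with s > c. Then there exists a positive integer N₀ such that for every integer N ≥ N₀ the integral ∫_{(0,∞)^m} ‖t‖^c · Π(t)^{-s} · ξ(t)^{-N} · (1 + t₁^{-1})^{-N} d×t is finite, where d×t denotes the product measure ∏_{i=1}^m dt_i/t_i on (0,∞)^m. -/

import Mathlib

open MeasureTheory Set

/-- The multiplicative Haar-type measure `dt/t` on `(0,∞) ⊆ ℝ`. -/
noncomputable def mulMeasure : Measure ℝ :=
  (volume.restrict (Set.Ioi (0 : ℝ))).withDensity (fun t => ENNReal.ofReal t⁻¹)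

/-- The product measure `d×t = ∏ dtᵢ/tᵢ` on `(0,∞)^m`, realized on `Fin m → ℝ`
(concentrated on the positive orthant). -/
noncomputable def mulMeasurePi (m : ℕ) : Measure (Fin m → ℝ) :=
  Measure.pi (fun _ => mulMeasure)

/-- For `t ∈ (0,∞)^m`, `‖t‖ := ∏ᵢ (tᵢ + tᵢ⁻¹)`. -/
noncomputable def tNorm {m : ℕ} (t : Fin m → ℝ) : ℝ :=
  ∏ i, (t i + (t i)⁻¹)

/-- For `t ∈ (0,∞)^m`, `Π(t) := ∏ᵢ tᵢ`. -/
noncomputable def tProd {m : ℕ} (t : Fin m → ℝ) : ℝ :=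
  ∏ i, t i

/-- For `t ∈ (0,∞)^m`, `ξ(t) := ∏_{i=1}^{m-1} (1 + tᵢ/tᵢ₊₁)` (an empty product is `1`). -/
noncomputable def xiProd {m : ℕ} (t : Fin m → ℝ) : ℝ :=
  ∏ i : Fin (m - 1), (1 + t ⟨(i : ℕ), by have := i.isLt; omega⟩ /
    t ⟨(i : ℕ) + 1, by have := i.isLt; omega⟩)

/-! ### Auxiliary lemmas -/

instance : SigmaFinite mulMeasure := by unfold mulMeasure; infer_instance

lemma mulMeasure_ae_pos : ∀ᵐ x ∂mulMeasure, 0 < x := by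
  have h : ∀ᵐ x ∂(volume.restrict (Set.Ioi (0:ℝ))), 0 < x := ae_restrict_mem measurableSet_Ioi
  exact (withDensity_absolutelyContinuous _ _).ae_le h

lemma ae_pos_pi (m : ℕ) :
    ∀ᵐ (t : Fin m → ℝ) ∂(Measure.pi fun _ => mulMeasure), ∀ i, 0 < t i := by
  exact Measure.ae_pi_le_pi (Filter.eventually_pi (fun i : Fin m => mulMeasure_ae_pos))

lemma lintegral_pi_prod (g : ℝ → ENNReal) (hg : Measurable g) :
    ∀ n : ℕ, ∫⁻ (t : Fin n → ℝ), ∏ i, g (t i) ∂(Measure.pi fun _ => mulMeasure)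
      = (∫⁻ x, g x ∂mulMeasure) ^ n := by
  intro n
  induction n with
  | zero => simp [lintegral_const, Measure.pi_univ]
  | succ n ih =>
      have hMP := measurePreserving_piFinSuccAbove (fun _ : Fin (n+1) => mulMeasure) 0
      set e := MeasurableEquiv.piFinSuccAbove (fun _ : Fin (n+1) => ℝ) 0
      have hH : Measurable (fun y : ℝ × (Fin n → ℝ) => g y.1 * ∏ j, g (y.2 j)) := by
        apply (hg.comp measurable_fst).mul
        exact Finset.measurable_prod _ fun j _ =>
          hg.comp ((measurable_pi_apply j).comp measurable_snd)
      have key : ∀ t : Fin (n+1) → ℝ,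
          (∏ i, g (t i)) = g ((e t).1) * ∏ j, g ((e t).2 j) := by
        intro t
        rw [Fin.prod_univ_succ]
        congr 1
      calc ∫⁻ (t : Fin (n+1) → ℝ), ∏ i, g (t i) ∂(Measure.pi fun _ => mulMeasure)
          = ∫⁻ t, (fun y : ℝ × (Fin n → ℝ) => g y.1 * ∏ j, g (y.2 j)) (e t)
              ∂(Measure.pi fun _ => mulMeasure) := by
            simp only [key]
        _ = ∫⁻ y, g y.1 * ∏ j, g (y.2 j)
              ∂(mulMeasure.prod (Measure.pi fun _ : Fin n => mulMeasure)) :=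
            hMP.lintegral_comp hH
        _ = (∫⁻ x, g x ∂mulMeasure) * (∫⁻ (t : Fin n → ℝ), ∏ j, g (t j)
              ∂(Measure.pi fun _ => mulMeasure)) := by
            exact lintegral_prod_mul hg.aemeasurable
              (Finset.measurable_prod _ fun j _ => hg.comp (measurable_pi_apply j)).aemeasurable
        _ = (∫⁻ x, g x ∂mulMeasure) ^ (n+1) := by rw [ih]; ring

lemma inv_one_add_inv_le (x : ℝ) (hx : 0 < x) : (1 + x⁻¹)⁻¹ ≤ min 1 x := by
  have h0 : 0 < 1 + x⁻¹ := by positivity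
  refine le_min ?_ ?_
  · rw [inv_le_one_iff₀]; right
    have : (0:ℝ) < x⁻¹ := by positivity
    linarith
  · rw [inv_le_comm₀ h0 hx]
    have : (0:ℝ) < x⁻¹ := by positivity
    linarith

lemma chain_ineq (a b : ℝ) (ha : 0 < a) (hb : 0 < b) :
    (1 + a / b)⁻¹ * (1 + a⁻¹)⁻¹ ≤ (1 + b⁻¹)⁻¹ := by
  rw [← mul_inv]
  apply inv_anti₀ (by positivity)
  have h : (1 + a / b) * (1 + a⁻¹) = 1 + a/b + a⁻¹ + b⁻¹ := by
    field_simp; ring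
  rw [h]
  have h1 : 0 ≤ a / b := by positivity
  have h2 : 0 ≤ a⁻¹ := by positivity
  linarith

lemma telescope (M : ℕ) : ∀ (n : ℕ) (N : ℕ) (u : ℕ → ℝ), (∀ i, 0 < u i) → (n+1) * M ≤ N →
    (∏ i ∈ Finset.range n, ((1 + u i / u (i+1))⁻¹) ^ N) * ((1 + (u 0)⁻¹)⁻¹) ^ N ≤
      ∏ i ∈ Finset.range (n+1), (min 1 (u i)) ^ M := by
  intro n
  induction n with
  | zero =>
      intro N u hu hN
      simp only [Finset.range_zero, Finset.prod_empty, one_mul]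
      simp only [zero_add, one_mul] at hN
      have h0 : 0 < u 0 := hu 0
      have hb : (0:ℝ) ≤ (1 + (u 0)⁻¹)⁻¹ := by positivity
      have hb1 : (1 + (u 0)⁻¹)⁻¹ ≤ min 1 (u 0) := inv_one_add_inv_le _ h0
      have hble : (1 + (u 0)⁻¹)⁻¹ ≤ 1 := hb1.trans (min_le_left _ _)
      calc ((1 + (u 0)⁻¹)⁻¹) ^ N ≤ ((1 + (u 0)⁻¹)⁻¹) ^ M :=
            pow_le_pow_of_le_one hb hble hN
        _ ≤ (min 1 (u 0)) ^ M := pow_le_pow_left₀ hb hb1 M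
        _ = ∏ i ∈ Finset.range (0+1), (min 1 (u i)) ^ M := by simp
  | succ n ih =>
      intro N u hu hN
      have hMN : M ≤ N := le_trans (by nlinarith) hN
      set K := N - M with hK
      have hNK : N = K + M := by omega
      have hKN : K ≤ N := by omega
      have hfpos : ∀ i : ℕ, (0:ℝ) < (1 + u i / u (i+1))⁻¹ := fun i => by
        have := hu i; have := hu (i+1); positivity
      have hfle1 : ∀ i : ℕ, (1 + u i / u (i+1))⁻¹ ≤ 1 := fun i => by
        rw [inv_le_one_iff₀]; right
        have h1 : 0 < u i / u (i+1) := div_pos (hu i) (hu (i+1))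
        linarith
      have hgpos : ∀ i, (0:ℝ) < (1 + (u i)⁻¹)⁻¹ := fun i => by have := hu i; positivity
      have hminpos : ∀ i, (0:ℝ) < min 1 (u i) := fun i => lt_min one_pos (hu i)
      rw [Finset.prod_range_succ']
      have step1 : (1 + u 0 / u (0+1))⁻¹ ^ N * ((1 + (u 0)⁻¹)⁻¹) ^ N ≤
          ((1 + (u 1)⁻¹)⁻¹) ^ K * (min 1 (u 0)) ^ M := by
        have e : (1 + u 0 / u (0+1))⁻¹ ^ N * ((1 + (u 0)⁻¹)⁻¹) ^ N =
            ((1 + u 0 / u 1)⁻¹ * (1 + (u 0)⁻¹)⁻¹) ^ K *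
              ((1 + u 0 / u 1)⁻¹ ^ M * ((1 + (u 0)⁻¹)⁻¹) ^ M) := by
          rw [hNK]; ring
        rw [e]
        have h1 : ((1 + u 0 / u 1)⁻¹ * (1 + (u 0)⁻¹)⁻¹) ^ K ≤ ((1 + (u 1)⁻¹)⁻¹) ^ K := by
          apply pow_le_pow_left₀ (mul_pos (hfpos 0) (hgpos 0)).le
          exact chain_ineq (u 0) (u 1) (hu 0) (hu 1)
        have h2 : (1 + u 0 / u 1)⁻¹ ^ M * ((1 + (u 0)⁻¹)⁻¹) ^ M ≤ (min 1 (u 0)) ^ M := by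
          calc (1 + u 0 / u 1)⁻¹ ^ M * ((1 + (u 0)⁻¹)⁻¹) ^ M
              ≤ 1 ^ M * ((min 1 (u 0))) ^ M := by
                apply mul_le_mul
                · exact pow_le_pow_left₀ (hfpos 0).le (hfle1 0) M
                · exact pow_le_pow_left₀ (hgpos 0).le (inv_one_add_inv_le _ (hu 0)) M
                · exact (pow_pos (hgpos 0) M).le
                · norm_num
            _ = (min 1 (u 0)) ^ M := by rw [one_pow, one_mul]
        exact mul_le_mul h1 h2 (mul_pos (pow_pos (hfpos 0) M) (pow_pos (hgpos 0) M)).le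
          (pow_pos (hgpos 1) K).le
      have hprodK : (∏ k ∈ Finset.range n, (1 + u (k+1) / u (k+1+1))⁻¹ ^ N) ≤
          ∏ k ∈ Finset.range n, (1 + u (k+1) / u (k+1+1))⁻¹ ^ K :=
        Finset.prod_le_prod (fun k _ => (pow_pos (hfpos (k+1)) N).le)
          (fun k _ => pow_le_pow_of_le_one (hfpos (k+1)).le (hfle1 (k+1)) hKN)
      have hIH : (∏ k ∈ Finset.range n, (1 + u (k+1) / u (k+1+1))⁻¹ ^ K) *
            ((1 + (u 1)⁻¹)⁻¹) ^ K ≤ ∏ i ∈ Finset.range (n+1), (min 1 (u (i+1))) ^ M := by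
        have hN' := hN
        rw [Nat.succ_mul (n+1) M] at hN'
        exact ih K (fun i => u (i+1)) (fun i => hu (i+1)) (by omega)
      calc (∏ k ∈ Finset.range n, (1 + u (k+1) / u (k+1+1))⁻¹ ^ N) *
              (1 + u 0 / u (0+1))⁻¹ ^ N * ((1 + (u 0)⁻¹)⁻¹) ^ N
          = (∏ k ∈ Finset.range n, (1 + u (k+1) / u (k+1+1))⁻¹ ^ N) *
              ((1 + u 0 / u (0+1))⁻¹ ^ N * ((1 + (u 0)⁻¹)⁻¹) ^ N) := by ring
        _ ≤ (∏ k ∈ Finset.range n, (1 + u (k+1) / u (k+1+1))⁻¹ ^ K) *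
              (((1 + (u 1)⁻¹)⁻¹) ^ K * (min 1 (u 0)) ^ M) := by
            apply mul_le_mul hprodK step1
              (mul_pos (pow_pos (hfpos 0) N) (pow_pos (hgpos 0) N)).le
              (Finset.prod_nonneg fun k _ => (pow_pos (hfpos (k+1)) K).le)
        _ = ((∏ k ∈ Finset.range n, (1 + u (k+1) / u (k+1+1))⁻¹ ^ K) *
              ((1 + (u 1)⁻¹)⁻¹) ^ K) * (min 1 (u 0)) ^ M := by ring
        _ ≤ (∏ i ∈ Finset.range (n+1), (min 1 (u (i+1))) ^ M) * (min 1 (u 0)) ^ M := by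
            apply mul_le_mul_of_nonneg_right hIH (pow_pos (hminpos 0) M).le
        _ = ∏ i ∈ Finset.range (n+1+1), (min 1 (u i)) ^ M := by
            rw [Finset.prod_range_succ' (fun i => (min 1 (u i)) ^ M) (n+1)]

noncomputable def Fone (c s : ℝ) (M : ℕ) (x : ℝ) : ℝ :=
  2 ^ |c| * (Real.exp (Real.log (max x x⁻¹) * c) * Real.exp (Real.log x * (-s)) * min 1 x ^ M)

lemma Fone_eq (c s : ℝ) (M : ℕ) (x : ℝ) (hx : 0 < x) :
    Fone c s M x = 2 ^ |c| * (max x x⁻¹ ^ c * x ^ (-s) * min 1 x ^ M) := by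
  unfold Fone
  rw [Real.rpow_def_of_pos (lt_max_of_lt_left hx), Real.rpow_def_of_pos hx]

lemma Fone_nonneg (c s : ℝ) (M : ℕ) (x : ℝ) (hx : 0 < x) : 0 ≤ Fone c s M x := by
  unfold Fone
  have h2 : (0:ℝ) ≤ min 1 x := le_min zero_le_one hx.le
  positivity

lemma Fone_measurable (c s : ℝ) (M : ℕ) : Measurable (Fone c s M) := by
  unfold Fone
  apply Measurable.const_mul
  apply Measurable.mul
  apply Measurable.mul
  · exact (Real.measurable_exp.comp
      ((Real.measurable_log.comp (measurable_id.max measurable_inv)).mul measurable_const))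
  · exact (Real.measurable_exp.comp (Real.measurable_log.mul measurable_const))
  · exact (measurable_const.min measurable_id).pow_const M

lemma one_var_finite (c s : ℝ) (M : ℕ) (hcs : c + s < M) (hs : c < s) :
    ∫⁻ x, ENNReal.ofReal (Fone c s M x) ∂mulMeasure < ⊤ := by
  unfold mulMeasure
  rw [lintegral_withDensity_eq_lintegral_mul _
    (measurable_inv.ennreal_ofReal) ((Fone_measurable c s M).ennreal_ofReal)]
  have hsplit : Ioc (0:ℝ) 1 ∪ Ioi 1 = Ioi 0 := Set.Ioc_union_Ioi_eq_Ioi zero_le_one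
  rw [← hsplit, lintegral_union measurableSet_Ioi (Set.Ioc_disjoint_Ioi le_rfl)]
  have hA : (∫⁻ x in Ioc (0:ℝ) 1,
      ((fun x => ENNReal.ofReal x⁻¹) * fun x => ENNReal.ofReal (Fone c s M x)) x) < ⊤ := by
    have heq : ∀ x ∈ Ioc (0:ℝ) 1,
        ((fun x => ENNReal.ofReal x⁻¹) * fun x => ENNReal.ofReal (Fone c s M x)) x =
        ENNReal.ofReal (2 ^ |c| * x ^ ((M:ℝ) - c - s - 1)) := by
      intro x hx
      obtain ⟨hx0, hx1⟩ := hx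
      have hxx : x ≤ x⁻¹ := le_trans hx1 (one_le_inv_iff₀.mpr ⟨hx0, hx1⟩)
      simp only [Pi.mul_apply]
      rw [← ENNReal.ofReal_mul (by positivity)]
      congr 1
      rw [Fone_eq _ _ _ _ hx0, max_eq_right hxx, min_eq_right hx1]
      have e1 : (x⁻¹ : ℝ) ^ c = x ^ (-c) := by
        rw [Real.inv_rpow hx0.le, ← Real.rpow_neg hx0.le]
      have e2 : (x:ℝ) ^ (M:ℕ) = x ^ (M:ℝ) := (Real.rpow_natCast x M).symm
      have e3 : (x:ℝ)⁻¹ = x ^ (-1:ℝ) := (Real.rpow_neg_one x).symm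
      rw [e1, e2, e3,
        show ((M:ℝ) - c - s - 1) = (-1) + (-c + (-s + (M:ℝ))) by ring,
        Real.rpow_add hx0, Real.rpow_add hx0, Real.rpow_add hx0]
      ring
    rw [setLIntegral_congr_fun measurableSet_Ioc heq]
    rw [← setLIntegral_congr Ioo_ae_eq_Ioc]
    have hInt : IntegrableOn (fun x : ℝ => 2 ^ |c| * x ^ ((M:ℝ) - c - s - 1)) (Ioo 0 1) := by
      apply Integrable.const_mul
      exact (intervalIntegral.integrableOn_Ioo_rpow_iff one_pos).mpr (by linarith)
    exact hInt.lintegral_lt_top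
  have hB : (∫⁻ x in Ioi (1:ℝ),
      ((fun x => ENNReal.ofReal x⁻¹) * fun x => ENNReal.ofReal (Fone c s M x)) x) < ⊤ := by
    have heq : ∀ x ∈ Ioi (1:ℝ),
        ((fun x => ENNReal.ofReal x⁻¹) * fun x => ENNReal.ofReal (Fone c s M x)) x =
        ENNReal.ofReal (2 ^ |c| * x ^ (c - s - 1)) := by
      intro x hx
      have hx1 : (1:ℝ) < x := hx
      have hx0 : (0:ℝ) < x := lt_trans one_pos hx1
      have hxx : x⁻¹ ≤ x := le_trans (inv_le_one_of_one_le₀ hx1.le) hx1.le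
      simp only [Pi.mul_apply]
      rw [← ENNReal.ofReal_mul (by positivity)]
      congr 1
      rw [Fone_eq _ _ _ _ hx0, max_eq_left hxx, min_eq_left hx1.le]
      have e3 : (x:ℝ)⁻¹ = x ^ (-1:ℝ) := (Real.rpow_neg_one x).symm
      rw [one_pow, e3,
        show (c - s - 1) = (-1) + (c + -s) by ring,
        Real.rpow_add hx0, Real.rpow_add hx0]
      ring
    rw [setLIntegral_congr_fun measurableSet_Ioi heq]
    have hInt : IntegrableOn (fun x : ℝ => 2 ^ |c| * x ^ (c - s - 1)) (Ioi 1) := by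
      apply Integrable.const_mul
      exact integrableOn_Ioi_rpow_of_lt (by linarith) one_pos
    exact hInt.lintegral_lt_top
  exact ENNReal.add_lt_top.mpr ⟨hA, hB⟩

lemma bound_c (x : ℝ) (hx : 0 < x) (c : ℝ) :
    (x + x⁻¹) ^ c ≤ 2 ^ |c| * max x x⁻¹ ^ c := by
  have hxinv : (0:ℝ) < x⁻¹ := by positivity
  have hmaxpos : (0:ℝ) < max x x⁻¹ := lt_max_of_lt_left hx
  rcases le_or_gt 0 c with hc | hc
  · have h1 : x + x⁻¹ ≤ 2 * max x x⁻¹ := by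
      rw [two_mul]; exact add_le_add (le_max_left _ _) (le_max_right _ _)
    have h2 : (x + x⁻¹) ^ c ≤ (2 * max x x⁻¹) ^ c :=
      Real.rpow_le_rpow (by positivity) h1 hc
    rw [Real.mul_rpow (by norm_num) hmaxpos.le] at h2
    rwa [abs_of_nonneg hc]
  · have h2 : max x x⁻¹ ≤ x + x⁻¹ := max_le (by linarith) (by linarith)
    have h3 : (x + x⁻¹) ^ c ≤ max x x⁻¹ ^ c :=
      Real.rpow_le_rpow_of_nonpos hmaxpos h2 hc.le
    have h4 : (1:ℝ) ≤ 2 ^ |c| := by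
      calc (1:ℝ) = (2:ℝ) ^ (0:ℝ) := (Real.rpow_zero 2).symm
        _ ≤ (2:ℝ) ^ |c| := Real.rpow_le_rpow_of_exponent_le one_le_two (abs_nonneg c)
    calc (x + x⁻¹) ^ c ≤ max x x⁻¹ ^ c := h3
      _ = 1 * max x x⁻¹ ^ c := (one_mul _).symm
      _ ≤ 2 ^ |c| * max x x⁻¹ ^ c :=
          mul_le_mul_of_nonneg_right h4 (Real.rpow_nonneg hmaxpos.le c)

lemma rpow_neg_nat (x : ℝ) (hx : 0 < x) (N : ℕ) : x ^ (-(N:ℝ)) = (x⁻¹) ^ N := by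
  rw [Real.rpow_neg hx.le, Real.rpow_natCast, inv_pow]

/-- Let `m ≥ 1` and let `c, s` be real numbers with `s > c`.  Then there is a positive
integer `N₀` such that for all integers `N ≥ N₀` the integral
`∫_{(0,∞)^m} ‖t‖^c Π(t)^{-s} ξ(t)^{-N} (1+t₁⁻¹)^{-N} d×t` is finite. -/
theorem finiteness_of_zeta_majorant (m : ℕ) (hm : 1 ≤ m) (c s : ℝ) (hs : s > c) :
    ∃ N₀ : ℕ, 0 < N₀ ∧ ∀ N : ℕ, N₀ ≤ N →
      (∫⁻ t, ENNReal.ofReal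
          (tNorm t ^ c * tProd t ^ (-s) * xiProd t ^ (-(N : ℝ)) *
            (1 + (t ⟨0, by omega⟩)⁻¹) ^ (-(N : ℝ)))
        ∂(mulMeasurePi m)) < ⊤ := by
  set M : ℕ := ⌈c + s⌉₊ + 1 with hM
  have hMR : c + s < (M : ℝ) := by
    calc c + s ≤ (⌈c + s⌉₊ : ℝ) := Nat.le_ceil _
      _ < (M : ℝ) := by rw [hM]; push_cast; linarith
  refine ⟨m * M, Nat.mul_pos (by omega) (Nat.succ_pos _), ?_⟩
  intro N hN
  have h0m : 0 < m := hm
  have key : ∀ᵐ (t : Fin m → ℝ) ∂(mulMeasurePi m),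
      ENNReal.ofReal (tNorm t ^ c * tProd t ^ (-s) * xiProd t ^ (-(N : ℝ)) *
        (1 + (t ⟨0, h0m⟩)⁻¹) ^ (-(N : ℝ)))
      ≤ ∏ i, ENNReal.ofReal (Fone c s M (t i)) := by
    have hae : ∀ᵐ (t : Fin m → ℝ) ∂(mulMeasurePi m), ∀ i, 0 < t i := by
      unfold mulMeasurePi; exact ae_pos_pi m
    filter_upwards [hae] with t ht
    rw [← ENNReal.ofReal_prod_of_nonneg (fun i _ => Fone_nonneg c s M _ (ht i))]
    apply ENNReal.ofReal_le_ofReal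
    set u : ℕ → ℝ := fun i => if h : i < m then t ⟨i, h⟩ else 1 with hu_def
    have hu : ∀ i, 0 < u i := by
      intro i
      simp only [hu_def]
      split
      · exact ht _
      · exact one_pos
    have hu0 : u 0 = t ⟨0, h0m⟩ := by simp only [hu_def, dif_pos h0m]
    have hA : tNorm t ^ c = ∏ i, (t i + (t i)⁻¹) ^ c := by
      rw [tNorm]
      exact (Real.finset_prod_rpow _ _ (fun i _ => (add_pos (ht i) (inv_pos.mpr (ht i))).le) _).symm
    have hB : tProd t ^ (-s) = ∏ i, (t i) ^ (-s) := by
      rw [tProd]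
      exact (Real.finset_prod_rpow _ _ (fun i _ => (ht i).le) _).symm
    have hxi : xiProd t = ∏ i ∈ Finset.range (m-1), (1 + u i / u (i+1)) := by
      rw [xiProd, ← Fin.prod_univ_eq_prod_range (fun i => 1 + u i / u (i+1)) (m-1)]
      apply Finset.prod_congr rfl
      intro i _
      have h1 : (i:ℕ) < m := by have := i.isLt; omega
      have h2 : (i:ℕ) + 1 < m := by have := i.isLt; omega
      simp only [hu_def, dif_pos h1, dif_pos h2]
    have hxipos : 0 < xiProd t := by
      rw [hxi]
      exact Finset.prod_pos fun i _ => by have := hu i; have := hu (i+1); positivity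
    have hgpos : 0 < 1 + (t ⟨0, h0m⟩)⁻¹ := by have := ht ⟨0, h0m⟩; positivity
    have hC : xiProd t ^ (-(N : ℝ)) * (1 + (t ⟨0, h0m⟩)⁻¹) ^ (-(N : ℝ)) ≤
        ∏ i, min 1 (t i) ^ M := by
      have hLHS : xiProd t ^ (-(N:ℝ)) * (1 + (t ⟨0, h0m⟩)⁻¹) ^ (-(N:ℝ))
          = (∏ i ∈ Finset.range (m-1), ((1 + u i / u (i+1))⁻¹) ^ N) *
            ((1 + (u 0)⁻¹)⁻¹) ^ N := by
        rw [rpow_neg_nat _ hxipos, rpow_neg_nat _ hgpos, hxi, hu0,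
          ← Finset.prod_inv_distrib, ← Finset.prod_pow]
      have htele := telescope M (m-1) N u hu
        (by rw [Nat.sub_add_cancel hm]; exact hN)
      rw [Nat.sub_add_cancel hm] at htele
      have hRHS : (∏ i ∈ Finset.range m, (min 1 (u i)) ^ M) = ∏ i, min 1 (t i) ^ M := by
        rw [← Fin.prod_univ_eq_prod_range (fun i => (min 1 (u i)) ^ M) m]
        apply Finset.prod_congr rfl
        intro i _
        simp only [hu_def, dif_pos i.isLt, Fin.eta]
      rw [hLHS, ← hRHS]
      exact htele
    have hABnonneg : 0 ≤ tNorm t ^ c * tProd t ^ (-s) := by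
      rw [hA, hB]
      exact mul_nonneg
        (Finset.prod_nonneg fun i _ => Real.rpow_nonneg (by have := ht i; positivity) _)
        (Finset.prod_nonneg fun i _ => Real.rpow_nonneg (ht i).le _)
    calc tNorm t ^ c * tProd t ^ (-s) * xiProd t ^ (-(N:ℝ)) *
            (1 + (t ⟨0, h0m⟩)⁻¹) ^ (-(N:ℝ))
        = (tNorm t ^ c * tProd t ^ (-s)) *
            (xiProd t ^ (-(N:ℝ)) * (1 + (t ⟨0, h0m⟩)⁻¹) ^ (-(N:ℝ))) := by ring
      _ ≤ (tNorm t ^ c * tProd t ^ (-s)) * ∏ i, min 1 (t i) ^ M :=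
          mul_le_mul_of_nonneg_left hC hABnonneg
      _ = ∏ i, ((t i + (t i)⁻¹) ^ c * (t i) ^ (-s) * min 1 (t i) ^ M) := by
          rw [hA, hB, ← Finset.prod_mul_distrib, ← Finset.prod_mul_distrib]
      _ ≤ ∏ i, Fone c s M (t i) := by
          apply Finset.prod_le_prod
          · intro i _
            have hx := ht i
            have h2 : (0:ℝ) ≤ min 1 (t i) := le_min zero_le_one hx.le
            have h3 : (0:ℝ) ≤ (t i + (t i)⁻¹) ^ c :=
              Real.rpow_nonneg (add_pos hx (inv_pos.mpr hx)).le c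
            have h4 : (0:ℝ) ≤ (t i) ^ (-s) := Real.rpow_nonneg hx.le _
            positivity
          · intro i _
            have hx := ht i
            have hrest : (0:ℝ) ≤ (t i) ^ (-s) * min 1 (t i) ^ M :=
              mul_nonneg (Real.rpow_nonneg hx.le _)
                (pow_nonneg (le_min zero_le_one hx.le) M)
            calc (t i + (t i)⁻¹) ^ c * (t i) ^ (-s) * min 1 (t i) ^ M
                = (t i + (t i)⁻¹) ^ c * ((t i) ^ (-s) * min 1 (t i) ^ M) := by ring
              _ ≤ (2 ^ |c| * max (t i) (t i)⁻¹ ^ c) *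
                    ((t i) ^ (-s) * min 1 (t i) ^ M) :=
                  mul_le_mul_of_nonneg_right (bound_c (t i) hx c) hrest
              _ = Fone c s M (t i) := by rw [Fone_eq c s M _ hx]; ring
  calc (∫⁻ t, ENNReal.ofReal
          (tNorm t ^ c * tProd t ^ (-s) * xiProd t ^ (-(N : ℝ)) *
            (1 + (t ⟨0, h0m⟩)⁻¹) ^ (-(N : ℝ))) ∂(mulMeasurePi m))
      ≤ ∫⁻ t, ∏ i, ENNReal.ofReal (Fone c s M (t i)) ∂(mulMeasurePi m) :=
        lintegral_mono_ae key
    _ = (∫⁻ x, ENNReal.ofReal (Fone c s M x) ∂mulMeasure) ^ m := by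
        unfold mulMeasurePi
        exact lintegral_pi_prod _ ((Fone_measurable c s M).ennreal_ofReal) m
    _ < ⊤ := ENNReal.pow_lt_top (one_var_finite c s M hMR hs)
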